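/- arXiv:2111.10323 — 4 statements merged into one kernel-verified Lean document; each statement's English description precedes it below -/
import Mathlib

section
/- Let $k_0(n) = \lfloor n\,(\ln 5 - \ln 3)/(\ln 5 - \ln 2)\rfloor$ and, for a stake $a > 0$, define the expected net profit after $n$ rounds of Elsberg's game by $G(a,n) = a\,\bigl[-1 + \sum_{k=0}^{k_0(n)} \binom{n}{k} (3/4)^k (3/10)^{n-k} + (1/2)^{n-1} \sum_{k=k_0(n)+1}^{n} \binom{n}{k}\bigr]$. Then for every $a > 0$, $G(a,n) \to -a$ as $n \to \infty$. -/
open Filter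

/-- Threshold separating losing from winning numbers of heads in Elsberg's game. -/
noncomputable def k0 (n : ℕ) : ℕ :=
  ⌊(n : ℝ) * (Real.log 5 - Real.log 3) / (Real.log 5 - Real.log 2)⌋₊

/-- Expected net profit after `n` rounds of Elsberg's game with stake `a`. -/
noncomputable def G (a : ℝ) (n : ℕ) : ℝ :=
  a * (-1 + ∑ k ∈ Finset.range (k0 n + 1), (n.choose k : ℝ) * (3/4)^k * (3/10)^(n-k)
    + (1/2 : ℝ)^(n-1) * ∑ k ∈ Finset.Icc (k0 n + 1) n, (n.choose k : ℝ))

/-! ### Auxiliary definitions and lemmas -/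

/-- The critical ratio `c = (log 5 - log 3)/(log 5 - log 2) ≈ 0.5575`. -/
noncomputable def cc : ℝ := (Real.log 5 - Real.log 3) / (Real.log 5 - Real.log 2)

lemma hl23 : Real.log 2 < Real.log 3 := Real.log_lt_log (by norm_num) (by norm_num)
lemma hl35 : Real.log 3 < Real.log 5 := Real.log_lt_log (by norm_num) (by norm_num)
lemma hl25 : Real.log 2 < Real.log 5 := hl23.trans hl35

lemma cc_nonneg : 0 ≤ cc := div_nonneg (by linarith [hl35]) (by linarith [hl25])

lemma cc_le_one : cc ≤ 1 := by
  unfold cc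
  rw [div_le_one (by linarith [hl25])]
  linarith [hl23]

lemma k0_eq (n : ℕ) : k0 n = ⌊(n:ℝ) * cc⌋₊ := by
  unfold k0 cc; rw [mul_div_assoc]

lemma k0_le (n : ℕ) : (k0 n : ℝ) ≤ n * cc := by
  rw [k0_eq]; exact Nat.floor_le (mul_nonneg (Nat.cast_nonneg n) cc_nonneg)

lemma lt_k0_add_one (n : ℕ) : (n:ℝ) * cc < k0 n + 1 := by
  rw [k0_eq]; exact Nat.lt_floor_add_one _

/-! ### Numeric log inequalities -/

lemma h3l : 84 * Real.log 2 < 53 * Real.log 3 := by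
  have h := Real.log_lt_log (by positivity) (by norm_num : (2:ℝ)^(84:ℕ) < 3^(53:ℕ))
  rw [Real.log_pow, Real.log_pow] at h
  push_cast at h; linarith

lemma h3u : 41 * Real.log 3 < 65 * Real.log 2 := by
  have h := Real.log_lt_log (by positivity) (by norm_num : (3:ℝ)^(41:ℕ) < 2^(65:ℕ))
  rw [Real.log_pow, Real.log_pow] at h
  push_cast at h; linarith

lemma h5l : 65 * Real.log 2 < 28 * Real.log 5 := by
  have h := Real.log_lt_log (by positivity) (by norm_num : (2:ℝ)^(65:ℕ) < 5^(28:ℕ))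
  rw [Real.log_pow, Real.log_pow] at h
  push_cast at h; linarith

lemma h5u : 59 * Real.log 5 < 137 * Real.log 2 := by
  have h := Real.log_lt_log (by positivity) (by norm_num : (5:ℝ)^(59:ℕ) < 2^(137:ℕ))
  rw [Real.log_pow, Real.log_pow] at h
  push_cast at h; linarith

lemma ineqA : (Real.log 5 - Real.log 3) * Real.log 2
    < (3*Real.log 2 + Real.log 5 - 3*Real.log 3) * (Real.log 5 - Real.log 2) := by
  have b1 := Real.log_two_gt_d9
  have b2 := Real.log_two_lt_d9
  nlinarith [h3l, h3u, h5l, h5u, Real.log_pos (by norm_num : (1:ℝ) < 2)]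

lemma ineqB : (Real.log 5 - 2*Real.log 2) * (Real.log 5 - Real.log 2)
    < (Real.log 5 - Real.log 3) * (Real.log 3 - Real.log 2) := by
  have b1 := Real.log_two_gt_d9
  have b2 := Real.log_two_lt_d9
  nlinarith [h3l, h3u, h5l, h5u, Real.log_pos (by norm_num : (1:ℝ) < 2)]

lemma q1_lt_one : (2:ℝ)^cc * (27/40) < 1 := by
  have h40 : Real.log (40/27) = 3*Real.log 2 + Real.log 5 - 3*Real.log 3 := by
    rw [show (40:ℝ)/27 = 2^(3:ℕ)*5/3^(3:ℕ) by norm_num,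
      Real.log_div (by positivity) (by positivity),
      Real.log_mul (by positivity) (by norm_num), Real.log_pow, Real.log_pow]
    push_cast; ring
  have h2 : (2:ℝ)^cc < 40/27 := by
    rw [Real.rpow_def_of_pos (by norm_num : (0:ℝ) < 2),
      show (40:ℝ)/27 = Real.exp (Real.log (40/27)) from (Real.exp_log (by norm_num)).symm]
    apply Real.exp_lt_exp.mpr
    rw [h40]
    unfold cc
    rw [mul_comm, div_mul_eq_mul_div, div_lt_iff₀ (by linarith [hl25])]
    exact ineqA
  nlinarith [Real.rpow_pos_of_pos (by norm_num : (0:ℝ) < 2) cc]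

lemma q2_lt_one : (5/4:ℝ) * ((3/2:ℝ)^cc)⁻¹ < 1 := by
  have h54 : Real.log (5/4) = Real.log 5 - 2*Real.log 2 := by
    rw [show (5:ℝ)/4 = 5/2^(2:ℕ) by norm_num, Real.log_div (by norm_num) (by positivity),
      Real.log_pow]
    push_cast; ring
  have h32 : Real.log (3/2) = Real.log 3 - Real.log 2 :=
    Real.log_div (by norm_num) (by norm_num)
  have h2 : (5/4:ℝ) < (3/2:ℝ)^cc := by
    rw [Real.rpow_def_of_pos (by norm_num : (0:ℝ) < 3/2),
      show (5:ℝ)/4 = Real.exp (Real.log (5/4)) from (Real.exp_log (by norm_num)).symm]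
    apply Real.exp_lt_exp.mpr
    rw [h54, h32]
    unfold cc
    rw [mul_comm, mul_comm (Real.log 3 - Real.log 2), div_mul_eq_mul_div,
      lt_div_iff₀ (by linarith [hl25])]
    linarith [ineqB]
  have hpos : (0:ℝ) < (3/2:ℝ)^cc := Real.rpow_pos_of_pos (by norm_num) _
  rw [mul_inv_lt_iff₀ hpos]
  linarith

/-! ### Bounds on the two sums -/

lemma S1_le (n : ℕ) :
    ∑ k ∈ Finset.range (k0 n + 1), (n.choose k : ℝ) * (3/4)^k * (3/10)^(n-k)
      ≤ ((2:ℝ)^cc * (27/40))^n := by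
  have step1 : ∀ k ∈ Finset.range (k0 n + 1),
      (n.choose k : ℝ) * (3/4)^k * (3/10)^(n-k)
        ≤ (2:ℝ)^((n:ℝ)*cc) * ((n.choose k : ℝ) * (3/8)^k * (3/10)^(n-k)) := by
    intro k hk
    have hkk : (k:ℝ) ≤ (n:ℝ)*cc := by
      have h1 : k ≤ k0 n := Nat.lt_succ_iff.mp (Finset.mem_range.mp hk)
      have h2 : (k:ℝ) ≤ (k0 n : ℝ) := by exact_mod_cast h1
      linarith [k0_le n]
    have h2 : ((2:ℝ))^(k:ℕ) ≤ (2:ℝ)^((n:ℝ)*cc) := by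
      rw [← Real.rpow_natCast 2 k]
      exact Real.rpow_le_rpow_left_iff (by norm_num) |>.mpr hkk
    have h34 : ((3:ℝ)/4)^k = 2^k * (3/8)^k := by
      rw [← mul_pow]; norm_num
    calc (n.choose k : ℝ) * (3/4)^k * (3/10)^(n-k)
        = (2:ℝ)^k * ((n.choose k : ℝ) * (3/8)^k * (3/10)^(n-k)) := by rw [h34]; ring
      _ ≤ (2:ℝ)^((n:ℝ)*cc) * ((n.choose k : ℝ) * (3/8)^k * (3/10)^(n-k)) := by
          apply mul_le_mul_of_nonneg_right h2
          positivity
  calc ∑ k ∈ Finset.range (k0 n + 1), (n.choose k : ℝ) * (3/4)^k * (3/10)^(n-k)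
      ≤ ∑ k ∈ Finset.range (k0 n + 1),
          (2:ℝ)^((n:ℝ)*cc) * ((n.choose k : ℝ) * (3/8)^k * (3/10)^(n-k)) :=
        Finset.sum_le_sum step1
    _ = (2:ℝ)^((n:ℝ)*cc) * ∑ k ∈ Finset.range (k0 n + 1),
          ((n.choose k : ℝ) * (3/8)^k * (3/10)^(n-k)) := by rw [Finset.mul_sum]
    _ ≤ (2:ℝ)^((n:ℝ)*cc) * ∑ k ∈ Finset.range (n + 1),
          ((n.choose k : ℝ) * (3/8)^k * (3/10)^(n-k)) := by
        apply mul_le_mul_of_nonneg_left _ (Real.rpow_nonneg (by norm_num) _)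
        apply Finset.sum_le_sum_of_subset_of_nonneg
        · apply Finset.range_subset_range.mpr
          have := lt_k0_add_one n
          have h1 : (n:ℝ)*cc ≤ n := by
            nlinarith [cc_nonneg, Nat.cast_nonneg (α := ℝ) n, cc_le_one]
          have h2 : (k0 n : ℝ) ≤ n := le_trans (k0_le n) h1
          have : k0 n ≤ n := by exact_mod_cast h2
          omega
        · intro i _ _; positivity
    _ = (2:ℝ)^((n:ℝ)*cc) * (27/40)^n := by
        congr 1
        calc ∑ k ∈ Finset.range (n + 1), ((n.choose k : ℝ) * (3/8)^k * (3/10)^(n-k))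
            = ∑ k ∈ Finset.range (n + 1), ((3/8:ℝ))^k * (3/10)^(n-k) * (n.choose k : ℝ) := by
              apply Finset.sum_congr rfl; intros; ring
          _ = ((3/8:ℝ) + 3/10)^n := (add_pow _ _ n).symm
          _ = (27/40:ℝ)^n := by norm_num
    _ = ((2:ℝ)^cc * (27/40))^n := by
        rw [mul_pow, ← Real.rpow_natCast ((2:ℝ)^cc) n, ← Real.rpow_mul (by norm_num), mul_comm cc]

lemma S2_le (n : ℕ) :
    (1/2:ℝ)^(n-1) * ∑ k ∈ Finset.Icc (k0 n + 1) n, (n.choose k : ℝ)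
      ≤ 2 * ((5/4:ℝ) * ((3/2:ℝ)^cc)⁻¹)^n := by
  set P : ℝ := (3/2:ℝ)^cc with hP
  have hPpos : 0 < P := Real.rpow_pos_of_pos (by norm_num) _
  have key : P^n * ∑ k ∈ Finset.Icc (k0 n + 1) n, (n.choose k : ℝ) ≤ (5/2:ℝ)^n := by
    rw [Finset.mul_sum]
    calc ∑ k ∈ Finset.Icc (k0 n + 1) n, P^n * (n.choose k : ℝ)
        ≤ ∑ k ∈ Finset.Icc (k0 n + 1) n, (3/2:ℝ)^k * (n.choose k : ℝ) := by
          apply Finset.sum_le_sum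
          intro k hk
          have hk1 : k0 n + 1 ≤ k := (Finset.mem_Icc.mp hk).1
          have hkc : (n:ℝ)*cc ≤ (k:ℝ) := by
            have := lt_k0_add_one n
            have h2 : ((k0 n : ℝ) + 1) ≤ (k:ℝ) := by exact_mod_cast hk1
            linarith
          have hPn : P^n = (3/2:ℝ)^(cc * n) := by
            rw [hP, ← Real.rpow_natCast ((3/2:ℝ)^cc) n, ← Real.rpow_mul (by norm_num)]
          rw [hPn]
          apply mul_le_mul_of_nonneg_right _ (Nat.cast_nonneg _)
          rw [← Real.rpow_natCast (3/2:ℝ) k]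
          exact Real.rpow_le_rpow_left_iff (by norm_num) |>.mpr (by linarith [hkc])
      _ ≤ ∑ k ∈ Finset.range (n + 1), (3/2:ℝ)^k * (n.choose k : ℝ) := by
          apply Finset.sum_le_sum_of_subset_of_nonneg
          · intro k hk
            rw [Finset.mem_range]
            exact Nat.lt_succ_of_le (Finset.mem_Icc.mp hk).2
          · intro i _ _; positivity
      _ = ((3/2:ℝ) + 1)^n := by
          rw [add_pow]
          exact Finset.sum_congr rfl (by intros; rw [one_pow, mul_one])
      _ = (5/2:ℝ)^n := by norm_num
  have hsum_nonneg : 0 ≤ ∑ k ∈ Finset.Icc (k0 n + 1) n, (n.choose k : ℝ) :=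
    Finset.sum_nonneg fun i _ => Nat.cast_nonneg _
  have hhalf : (1/2:ℝ)^(n-1) ≤ 2 * (1/2:ℝ)^n := by
    cases n with
    | zero => norm_num
    | succ m =>
        rw [Nat.succ_sub_one, pow_succ]
        ring_nf
        linarith [pow_nonneg (by norm_num : (0:ℝ) ≤ 1/2) m]
  have hsum_le : ∑ k ∈ Finset.Icc (k0 n + 1) n, (n.choose k : ℝ) ≤ (5/2:ℝ)^n / P^n := by
    rw [le_div_iff₀ (by positivity)]
    linarith [key]
  calc (1/2:ℝ)^(n-1) * ∑ k ∈ Finset.Icc (k0 n + 1) n, (n.choose k : ℝ)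
      ≤ (2 * (1/2:ℝ)^n) * ((5/2:ℝ)^n / P^n) :=
        mul_le_mul hhalf hsum_le hsum_nonneg (by positivity)
    _ = 2 * ((5/4:ℝ) * P⁻¹)^n := by
        have h54 : (1/2:ℝ)^n * (5/2:ℝ)^n = (5/4:ℝ)^n := by rw [← mul_pow]; norm_num
        rw [mul_pow, inv_pow, div_eq_mul_inv, ← h54]; ring

/-! ### Main theorem -/

theorem expected_net_profit_tendsto_neg_stake (a : ℝ) (ha : 0 < a) :
    Tendsto (fun n : ℕ => G a n) atTop (nhds (-a)) := by
  have hq1nn : (0:ℝ) ≤ (2:ℝ)^cc * (27/40) := by positivity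
  have hq2nn : (0:ℝ) ≤ (5/4:ℝ) * ((3/2:ℝ)^cc)⁻¹ := by positivity
  have hS1 : Tendsto (fun n : ℕ =>
      ∑ k ∈ Finset.range (k0 n + 1), (n.choose k : ℝ) * (3/4)^k * (3/10)^(n-k))
      atTop (nhds 0) := by
    apply squeeze_zero (fun n => Finset.sum_nonneg fun i _ => by positivity) S1_le
    exact tendsto_pow_atTop_nhds_zero_of_lt_one hq1nn q1_lt_one
  have hS2 : Tendsto (fun n : ℕ =>
      (1/2:ℝ)^(n-1) * ∑ k ∈ Finset.Icc (k0 n + 1) n, (n.choose k : ℝ))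
      atTop (nhds 0) := by
    apply squeeze_zero (fun n => by positivity) S2_le
    have h := (tendsto_pow_atTop_nhds_zero_of_lt_one hq2nn q2_lt_one).const_mul (2:ℝ)
    simpa using h
  have hmain : Tendsto (fun n : ℕ =>
      a * (-1 + (∑ k ∈ Finset.range (k0 n + 1), (n.choose k : ℝ) * (3/4)^k * (3/10)^(n-k))
        + (1/2:ℝ)^(n-1) * ∑ k ∈ Finset.Icc (k0 n + 1) n, (n.choose k : ℝ)))
      atTop (nhds (a * (-1 + 0 + 0))) :=
    Tendsto.const_mul a ((tendsto_const_nhds.add hS1).add hS2)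
  have heq : a * (-1 + 0 + 0) = -a := by ring
  rw [heq] at hmain
  exact hmain
end

section
/- If $d \in (0,1]$ and $x \in [0,d]$, then $(1-x)^{1-x} (d-x)^x \ge 1 - x/d$. Moreover, the inequality is strict when $d \in (0,1)$ and $x \in (0,d)$. -/
open Real

lemma strict_amgm2 {w₁ w₂ p₁ p₂ : ℝ} (hw₁ : 0 < w₁) (hw₂ : 0 < w₂)
    (hp₁ : 0 < p₁) (hp₂ : 0 < p₂) (hw : w₁ + w₂ = 1) (hne : p₁ ≠ p₂) :
    p₁ ^ w₁ * p₂ ^ w₂ < w₁ * p₁ + w₂ * p₂ := by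
  have h := strictConcaveOn_log_Ioi.2 (Set.mem_Ioi.2 hp₁) (Set.mem_Ioi.2 hp₂) hne hw₁ hw₂ hw
  simp only [smul_eq_mul] at h
  have h2 : log (p₁ ^ w₁ * p₂ ^ w₂) < log (w₁ * p₁ + w₂ * p₂) := by
    rwa [Real.log_mul (by positivity) (by positivity), Real.log_rpow hp₁, Real.log_rpow hp₂]
  have := Real.exp_lt_exp.2 h2
  rwa [Real.exp_log (by positivity), Real.exp_log (by positivity)] at this

theorem analytic_inequality_one (d x : ℝ)
    (hd0 : 0 < d) (hd1 : d ≤ 1) (hx0 : 0 ≤ x) (hxd : x ≤ d) :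
    1 - x / d ≤ (1 - x) ^ (1 - x) * (d - x) ^ x ∧
    (d < 1 → 0 < x → x < d → 1 - x / d < (1 - x) ^ (1 - x) * (d - x) ^ x) := by
  have key : ∀ (hxd' : x < d),
      1 - x / d ≤ (1 - x) ^ (1 - x) * (d - x) ^ x := by
    intro hxd'
    have hA : 0 < 1 - x := by linarith
    have hB : 0 < d - x := by linarith
    have h := Real.geom_mean_le_arith_mean2_weighted (by linarith : (0:ℝ) ≤ 1 - x) hx0
      (le_of_lt (inv_pos.2 hA)) (le_of_lt (inv_pos.2 hB)) (by ring)
    have hsum : (1 - x) * (1 - x)⁻¹ + x * (d - x)⁻¹ = d / (d - x) := by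
      field_simp
      ring
    rw [hsum] at h
    have hGM : (1 - x)⁻¹ ^ (1 - x) * (d - x)⁻¹ ^ x
        = ((1 - x) ^ (1 - x) * (d - x) ^ x)⁻¹ := by
      rw [Real.inv_rpow hA.le, Real.inv_rpow hB.le, mul_inv]
    rw [hGM] at h
    have hP : 0 < (1 - x) ^ (1 - x) * (d - x) ^ x := by positivity
    have hd' : 0 < d / (d - x) := by positivity
    have h2 : (d / (d - x))⁻¹ ≤ (1 - x) ^ (1 - x) * (d - x) ^ x := by
      rw [← inv_inv ((1 - x) ^ (1 - x) * (d - x) ^ x)]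
      exact inv_anti₀ (by positivity) h
    have : (d / (d - x))⁻¹ = 1 - x / d := by field_simp
    linarith [this ▸ h2]
  constructor
  · rcases eq_or_lt_of_le hxd with heq | hxd'
    · subst heq
      simp [div_self hd0.ne', sub_self, Real.zero_rpow hd0.ne']
    · exact key hxd'
  · intro hd1' hx0' hxd'
    have hA : 0 < 1 - x := by linarith
    have hB : 0 < d - x := by linarith
    have hne : ((1 - x):ℝ)⁻¹ ≠ (d - x)⁻¹ := by
      intro h
      have := inv_injective h
      linarith
    have h := strict_amgm2 hA hx0' (inv_pos.2 hA) (inv_pos.2 hB) (by ring) hne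
    have hsum : (1 - x) * (1 - x)⁻¹ + x * (d - x)⁻¹ = d / (d - x) := by
      field_simp
      ring
    rw [hsum] at h
    have hGM : (1 - x)⁻¹ ^ (1 - x) * (d - x)⁻¹ ^ x
        = ((1 - x) ^ (1 - x) * (d - x) ^ x)⁻¹ := by
      rw [Real.inv_rpow hA.le, Real.inv_rpow hB.le, mul_inv]
    rw [hGM] at h
    have hP : 0 < (1 - x) ^ (1 - x) * (d - x) ^ x := by positivity
    have h2 : (d / (d - x))⁻¹ < (1 - x) ^ (1 - x) * (d - x) ^ x := by
      rw [← inv_inv ((1 - x) ^ (1 - x) * (d - x) ^ x)]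
      exact inv_strictAnti₀ (by positivity) h
    have : (d / (d - x))⁻¹ = 1 - x / d := by field_simp
    linarith [this ▸ h2]
end

section
/- Let $p \in (0,1)$, $0 < d \le 1 \le u$ with $u \ne d$ and $u^p d^{1-p} \ne 1$, $\tilde{k}_0(n,u,d) = \lfloor n \ln(1/d)/\ln(u/d) \rfloor$, let $X_n$ be a Binomial$(n,p)$ random variable, and define the net profit $T_n = -1 + \sum_{k=0}^{\tilde{k}_0(n,u,d)} \mathbf{1}\{X_n = k\}\, u^k d^{n-k} + 2\cdot\mathbf{1}\{X_n \ge \tilde{k}_0(n,u,d)+1\}$. Then $T_n$ converges in probability to $1$ if $u^p d^{1-p} > 1$, and converges in probability to $-1$ if $u^p d^{1-p} < 1$. -/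
open Filter MeasureTheory Topology

/-- Threshold separating losing from winning numbers of heads. -/
noncomputable def ktilde (n : ℕ) (u d : ℝ) : ℕ :=
  ⌊(n : ℝ) * Real.log (1/d) / Real.log (u/d)⌋₊

noncomputable def binomP (n k : ℕ) (p : ℝ) : ℝ :=
  (n.choose k : ℝ) * p^k * (1-p)^(n-k)

lemma binomP_nonneg {p : ℝ} (hp0 : 0 ≤ p) (hp1 : p ≤ 1) (n k : ℕ) :
    0 ≤ binomP n k p := by
  unfold binomP
  have : (0:ℝ) ≤ 1 - p := by linarith
  positivity

lemma binomP_sum (n : ℕ) (p : ℝ) :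
    ∑ k ∈ Finset.range (n+1), binomP n k p = 1 := by
  have h := add_pow p (1-p) n
  simp only [add_sub_cancel, one_pow] at h
  exact (Finset.sum_congr rfl fun k _ => by unfold binomP; ring).trans h.symm

lemma binomP_step (m k : ℕ) (p : ℝ) :
    ((k:ℝ)+1) * binomP (m+1) (k+1) p = ((m:ℝ)+1) * p * binomP m k p := by
  have h := Nat.add_one_mul_choose_eq m k
  have h' : ((m:ℝ)+1) * (m.choose k : ℝ) = ((m+1).choose (k+1) : ℝ) * ((k:ℝ)+1) := by
    exact_mod_cast congrArg (Nat.cast : ℕ → ℝ) h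
  simp only [binomP, Nat.succ_sub_succ, pow_succ]
  linear_combination (-(p^k * p * (1-p)^(m-k))) * h'

lemma binomP_sum_mul (n : ℕ) (p : ℝ) :
    ∑ k ∈ Finset.range (n+1), (k:ℝ) * binomP n k p = n * p := by
  cases n with
  | zero => simp
  | succ m =>
    rw [Finset.sum_range_succ']
    simp only [Nat.cast_zero, zero_mul, add_zero]
    have : ∀ k ∈ Finset.range (m+1),
        ((k+1 : ℕ):ℝ) * binomP (m+1) (k+1) p = ((m:ℝ)+1) * p * binomP m k p := by
      intro k _
      push_cast
      exact binomP_step m k p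
    rw [Finset.sum_congr rfl this, ← Finset.mul_sum, binomP_sum]
    push_cast; ring

lemma binomP_sum_mul2 (n : ℕ) (p : ℝ) :
    ∑ k ∈ Finset.range (n+1), (k:ℝ) * ((k:ℝ)-1) * binomP n k p
      = n * ((n:ℝ)-1) * p^2 := by
  cases n with
  | zero => simp
  | succ m =>
    rw [Finset.sum_range_succ']
    simp only [Nat.cast_zero, zero_sub, zero_mul, add_zero]
    have : ∀ k ∈ Finset.range (m+1),
        ((k+1 : ℕ):ℝ) * (((k+1 : ℕ):ℝ)-1) * binomP (m+1) (k+1) p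
          = ((m:ℝ)+1) * p * ((k:ℝ) * binomP m k p) := by
      intro k _
      push_cast
      have := binomP_step m k p
      nlinarith [this]
    rw [Finset.sum_congr rfl this, ← Finset.mul_sum, binomP_sum_mul]
    push_cast; ring

lemma binomP_var (n : ℕ) (p : ℝ) :
    ∑ k ∈ Finset.range (n+1), ((k:ℝ) - n*p)^2 * binomP n k p = n*p*(1-p) := by
  have key : ∑ k ∈ Finset.range (n+1), ((k:ℝ) - n*p)^2 * binomP n k p
      = (∑ k ∈ Finset.range (n+1), (k:ℝ)*((k:ℝ)-1) * binomP n k p)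
        + (1 - 2*n*p) * (∑ k ∈ Finset.range (n+1), (k:ℝ) * binomP n k p)
        + ((n:ℝ)*p)^2 * (∑ k ∈ Finset.range (n+1), binomP n k p) := by
    rw [Finset.mul_sum, Finset.mul_sum, ← Finset.sum_add_distrib, ← Finset.sum_add_distrib]
    exact Finset.sum_congr rfl fun k _ => by ring
  rw [key, binomP_sum, binomP_sum_mul, binomP_sum_mul2]
  ring

lemma binomP_cheb (n : ℕ) {p t : ℝ} (hp0 : 0 ≤ p) (hp1 : p ≤ 1) (ht : 0 < t)
    (s : Finset ℕ) (hs : ∀ k ∈ s, t ≤ |(k:ℝ) - n*p|) :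
    ∑ k ∈ s, binomP n k p ≤ n*p*(1-p)/t^2 := by
  have hb := binomP_nonneg hp0 hp1 n
  have ht2 : (0:ℝ) < t^2 := by positivity
  have step1 : ∑ k ∈ s, binomP n k p
      ≤ ∑ k ∈ s, (((k:ℝ) - n*p)/t)^2 * binomP n k p := by
    refine Finset.sum_le_sum fun k hk => ?_
    have h1 : t^2 ≤ ((k:ℝ) - n*p)^2 := by
      have := hs k hk
      nlinarith [abs_nonneg ((k:ℝ) - n*p), sq_abs ((k:ℝ) - n*p)]
    have : (1:ℝ) ≤ (((k:ℝ) - n*p)/t)^2 := by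
      rw [div_pow]
      exact (one_le_div ht2).mpr h1
    nlinarith [hb k]
  have step2 : ∑ k ∈ s, (((k:ℝ) - n*p)/t)^2 * binomP n k p
      ≤ ∑ k ∈ s ∪ Finset.range (n+1), (((k:ℝ) - n*p)/t)^2 * binomP n k p := by
    refine Finset.sum_le_sum_of_subset_of_nonneg Finset.subset_union_left ?_
    intro k _ _
    have := hb k
    positivity
  have step3 : ∑ k ∈ s ∪ Finset.range (n+1), (((k:ℝ) - n*p)/t)^2 * binomP n k p
      = ∑ k ∈ Finset.range (n+1), (((k:ℝ) - n*p)/t)^2 * binomP n k p := by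
    refine (Finset.sum_subset Finset.subset_union_right fun x _ hx => ?_).symm
    have hxn : n < x := by
      rcases lt_or_ge n x with h | h
      · exact h
      · exact absurd (Finset.mem_range.mpr (Nat.lt_succ_of_le h)) hx
    have : n.choose x = 0 := Nat.choose_eq_zero_of_lt hxn
    simp [binomP, this]
  have step4 : ∑ k ∈ Finset.range (n+1), (((k:ℝ) - n*p)/t)^2 * binomP n k p
      = (n*p*(1-p))/t^2 := by
    have : ∀ k ∈ Finset.range (n+1), (((k:ℝ) - n*p)/t)^2 * binomP n k p
        = (1/t^2) * (((k:ℝ) - n*p)^2 * binomP n k p) := by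
      intro k _; ring
    rw [Finset.sum_congr rfl this, ← Finset.mul_sum, binomP_var]
    ring
  calc ∑ k ∈ s, binomP n k p ≤ _ := step1
    _ ≤ _ := step2
    _ = _ := by rw [step3, step4]

set_option maxHeartbeats 1600000 in
theorem net_profit_tendsto_in_probability
    {Ω : Type*} [MeasurableSpace Ω] (μ : Measure Ω) [IsProbabilityMeasure μ]
    (p u d : ℝ) (hp0 : 0 < p) (hp1 : p < 1)
    (hd0 : 0 < d) (hd1 : d ≤ 1) (hu : 1 ≤ u) (hne : u ≠ d)
    (hcrit : u ^ p * d ^ (1 - p) ≠ 1)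
    (X : ℕ → Ω → ℕ) (hXmeas : ∀ n, Measurable (X n))
    (hXbin : ∀ n k : ℕ,
      μ {ω | X n ω = k} = ENNReal.ofReal ((n.choose k : ℝ) * p^k * (1 - p)^(n-k)))
    (T : ℕ → Ω → ℝ)
    (hT : ∀ n ω, T n ω =
      -1 + (∑ k ∈ Finset.range (ktilde n u d + 1),
              if X n ω = k then u^k * d^(n-k) else 0)
        + 2 * (if ktilde n u d + 1 ≤ X n ω then (1 : ℝ) else 0)) :
    (1 < u ^ p * d ^ (1 - p) →
      TendstoInMeasure μ T atTop (fun _ => (1 : ℝ))) ∧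
    (u ^ p * d ^ (1 - p) < 1 →
      TendstoInMeasure μ T atTop (fun _ => (-1 : ℝ))) := by
  have hu0 : (0:ℝ) < u := lt_of_lt_of_le one_pos hu
  have hud1 : 1 < u / d := by
    rw [lt_div_iff₀ hd0, one_mul]
    exact lt_of_le_of_ne (hd1.trans hu) (Ne.symm hne)
  obtain ⟨L, hLdef⟩ : ∃ x : ℝ, x = Real.log (u/d) := ⟨_, rfl⟩
  have hL : 0 < L := by rw [hLdef]; exact Real.log_pos hud1
  obtain ⟨Q, hQdef⟩ : ∃ x : ℝ, x = Real.log (1/d) / L := ⟨_, rfl⟩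
  have hlogud : L = Real.log u - Real.log d := by
    rw [hLdef]; exact Real.log_div (ne_of_gt hu0) (ne_of_gt hd0)
  have hlog1d : Real.log (1/d) = -Real.log d := by rw [one_div, Real.log_inv]
  have hQ0 : 0 ≤ Q := by
    rw [hQdef]
    apply div_nonneg _ (le_of_lt hL)
    apply Real.log_nonneg
    rw [le_div_iff₀ hd0, one_mul]; exact hd1
  have hQ1 : Q ≤ 1 := by
    rw [hQdef, div_le_one hL, hLdef]
    rw [Real.log_le_log_iff (by positivity) (by positivity)]
    gcongr
  have hQL : Q * L = Real.log (1/d) := by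
    rw [hQdef]; exact div_mul_cancel₀ _ (ne_of_gt hL)
  have hlogcrit : Real.log (u ^ p * d ^ (1 - p)) = (p - Q) * L := by
    have hlogd : Real.log d = -(Q*L) := by rw [hQL, hlog1d]; ring
    have hlogu : Real.log u = L + Real.log d := by rw [hlogud]; ring
    rw [Real.log_mul (ne_of_gt (Real.rpow_pos_of_pos hu0 p))
      (ne_of_gt (Real.rpow_pos_of_pos hd0 (1-p))),
      Real.log_rpow hu0, Real.log_rpow hd0, hlogu, hlogd]
    ring
  -- ktilde rewrite
  have hktilde : ∀ n : ℕ, ktilde n u d = ⌊(n:ℝ) * Q⌋₊ := by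
    intro n
    unfold ktilde
    rw [hQdef, hLdef, mul_div_assoc]
  -- measure lemmas
  have hsub : ∀ (n : ℕ) (s : Finset ℕ),
      μ {ω | X n ω ∈ s} ≤ ENNReal.ofReal (∑ k ∈ s, binomP n k p) := by
    intro n s
    have hset : {ω | X n ω ∈ s} = ⋃ k ∈ s, {ω | X n ω = k} := by
      ext ω; simp
    rw [hset]
    calc μ (⋃ k ∈ s, {ω | X n ω = k}) ≤ ∑ k ∈ s, μ {ω | X n ω = k} :=
          measure_biUnion_finset_le s _
      _ = ∑ k ∈ s, ENNReal.ofReal (binomP n k p) := by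
          exact Finset.sum_congr rfl fun k _ => hXbin n k
      _ = ENNReal.ofReal (∑ k ∈ s, binomP n k p) :=
          (ENNReal.ofReal_sum_of_nonneg fun k _ =>
            binomP_nonneg (le_of_lt hp0) (le_of_lt hp1) n k).symm
  have hmeasset : ∀ n k, MeasurableSet {ω | X n ω = k} := by
    intro n k
    exact (hXmeas n) (measurableSet_singleton k)
  have htail : ∀ n : ℕ, μ {ω | n + 1 ≤ X n ω} = 0 := by
    intro n
    have hset : {ω | X n ω ∈ Finset.range (n+1)} = ⋃ k ∈ Finset.range (n+1), {ω | X n ω = k} := by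
      ext ω; simp
    have hdisj : (Finset.range (n+1) : Set ℕ).PairwiseDisjoint
        (fun k => {ω | X n ω = k}) := by
      intro i _ j _ hij
      refine Set.disjoint_left.mpr fun ω hi hj => hij ?_
      rw [← hi, ← hj]
    have h1 : μ {ω | X n ω ∈ Finset.range (n+1)} = 1 := by
      rw [hset, measure_biUnion_finset hdisj fun k _ => hmeasset n k]
      have : ∀ k ∈ Finset.range (n+1),
          μ {ω | X n ω = k} = ENNReal.ofReal (binomP n k p) :=
        fun k _ => hXbin n k
      rw [Finset.sum_congr rfl this,
        ← ENNReal.ofReal_sum_of_nonneg fun k _ =>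
            binomP_nonneg (le_of_lt hp0) (le_of_lt hp1) n k,
        binomP_sum]
      simp
    have hcompl : {ω | n + 1 ≤ X n ω} = {ω | X n ω ∈ Finset.range (n+1)}ᶜ := by
      ext ω; simp [Nat.lt_succ_iff, not_le, Nat.succ_le_iff]
    have hmeas : MeasurableSet {ω | X n ω ∈ Finset.range (n+1)} := by
      rw [hset]
      exact MeasurableSet.biUnion (Finset.range (n+1)).countable_toSet
        fun k _ => hmeasset n k
    rw [hcompl, measure_compl hmeas (measure_ne_top μ _), h1, measure_univ]
    simp
  -- generic tendsto of the bound
  have hbound_tendsto : ∀ C : ℝ,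
      Tendsto (fun n : ℕ => ENNReal.ofReal (C / n)) atTop (𝓝 0) := by
    intro C
    have := ENNReal.tendsto_ofReal (tendsto_const_div_atTop_nhds_zero_nat C)
    simpa using this
  constructor
  · -- winning case
    intro hgt
    have hQp : Q < p := by
      have h0 : 0 < Real.log (u ^ p * d ^ (1 - p)) := Real.log_pos hgt
      rw [hlogcrit] at h0
      nlinarith
    obtain ⟨δ, hδdef⟩ : ∃ x : ℝ, x = (p - Q)/2 := ⟨_, rfl⟩
    have hδ : 0 < δ := by rw [hδdef]; linarith
    rw [tendstoInMeasure_iff_dist]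
    intro ε hε
    refine tendsto_of_tendsto_of_tendsto_of_le_of_le'
      tendsto_const_nhds (hbound_tendsto (p*(1-p)/δ^2))
      (Eventually.of_forall fun n => zero_le) ?_
    filter_upwards [eventually_ge_atTop 1] with n hn1
    have hn0 : (0:ℝ) < n := by exact_mod_cast hn1
    -- event inclusion
    have hincl : {ω | ε ≤ dist (T n ω) 1} ⊆ {ω | X n ω ∈ Finset.range (ktilde n u d + 1)} := by
      intro ω hω
      simp only [Set.mem_setOf_eq, Finset.mem_range, Nat.lt_succ_iff]
      by_contra hX
      push_neg at hX
      have hT1 : T n ω = 1 := by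
        rw [hT n ω]
        have hsum : (∑ k ∈ Finset.range (ktilde n u d + 1),
            if X n ω = k then u^k * d^(n-k) else 0) = 0 := by
          apply Finset.sum_eq_zero
          intro k hk
          have : k < X n ω := lt_of_lt_of_le (Finset.mem_range.mp hk) hX
          simp [Nat.ne_of_gt this]
        have hX' : ktilde n u d + 1 ≤ X n ω := hX
        rw [hsum, if_pos hX']
        ring
      simp only [Set.mem_setOf_eq, hT1, dist_self] at hω
      linarith
    calc μ {ω | ε ≤ dist (T n ω) 1}
        ≤ μ {ω | X n ω ∈ Finset.range (ktilde n u d + 1)} := measure_mono hincl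
      _ ≤ ENNReal.ofReal (∑ k ∈ Finset.range (ktilde n u d + 1), binomP n k p) := hsub n _
      _ ≤ ENNReal.ofReal (p*(1-p)/δ^2 / n) := by
          apply ENNReal.ofReal_le_ofReal
          have hkey : ∀ k ∈ Finset.range (ktilde n u d + 1), δ * n ≤ |(k:ℝ) - n*p| := by
            intro k hk
            have hkk : k ≤ ktilde n u d := Nat.lt_succ_iff.mp (Finset.mem_range.mp hk)
            have hkQ : (k:ℝ) ≤ n * Q := by
              have heq := hktilde n
              have h1 : (k:ℝ) ≤ (⌊(n:ℝ) * Q⌋₊ : ℝ) := by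
                exact_mod_cast (heq ▸ hkk)
              exact le_trans h1 (Nat.floor_le (by positivity))
            rw [le_abs]
            right
            have hQp2 : n * Q ≤ n * p - 2 * (δ * n) := by
              have : 2 * δ = p - Q := by rw [hδdef]; ring
              nlinarith
            nlinarith
          have hcheb := binomP_cheb n (le_of_lt hp0) (le_of_lt hp1)
            (t := δ * n) (mul_pos hδ hn0) (Finset.range (ktilde n u d + 1)) hkey
          calc ∑ k ∈ Finset.range (ktilde n u d + 1), binomP n k p
              ≤ n*p*(1-p)/(δ*n)^2 := hcheb
            _ = p*(1-p)/δ^2 / n := by field_simp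
  · -- losing case
    intro hlt
    have hpQ : p < Q := by
      have h0 : Real.log (u ^ p * d ^ (1 - p)) < 0 :=
        Real.log_neg (by positivity) hlt
      rw [hlogcrit] at h0
      nlinarith
    obtain ⟨α, hαdef⟩ : ∃ x : ℝ, x = (p + Q)/2 := ⟨_, rfl⟩
    obtain ⟨δ, hδdef⟩ : ∃ x : ℝ, x = (Q - p)/2 := ⟨_, rfl⟩
    have hδ : 0 < δ := by rw [hδdef]; linarith
    have hα1 : α ≤ 1 := by rw [hαdef]; linarith
    have hαQ : α < Q := by rw [hαdef]; linarith
    have hα0 : 0 ≤ α := by rw [hαdef]; positivity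
    obtain ⟨r, hrdef⟩ : ∃ x : ℝ, x = Real.exp ((α - Q) * L) := ⟨_, rfl⟩
    have hr0 : 0 < r := by rw [hrdef]; exact Real.exp_pos _
    have hr1 : r < 1 := by
      rw [hrdef, Real.exp_lt_one_iff]
      apply mul_neg_of_neg_of_pos (by linarith) hL
    rw [tendstoInMeasure_iff_dist]
    intro ε hε
    have hrn : Tendsto (fun n : ℕ => r ^ n) atTop (𝓝 0) :=
      tendsto_pow_atTop_nhds_zero_of_lt_one (le_of_lt hr0) hr1
    refine tendsto_of_tendsto_of_tendsto_of_le_of_le'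
      tendsto_const_nhds (hbound_tendsto (p*(1-p)/δ^2))
      (Eventually.of_forall fun n => zero_le) ?_
    filter_upwards [eventually_ge_atTop 1, hrn.eventually (gt_mem_nhds hε)] with n hn1 hrε
    have hn0 : (0:ℝ) < n := by exact_mod_cast hn1
    obtain ⟨m, hmdef⟩ : ∃ x : ℕ, x = ⌊α * (n:ℝ)⌋₊ + 1 := ⟨_, rfl⟩
    -- inclusion
    have hincl : {ω | ε ≤ dist (T n ω) (-1)} ⊆ {ω | m ≤ X n ω} := by
      intro ω hω
      simp only [Set.mem_setOf_eq] at hω ⊢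
      by_contra hX
      push_neg at hX
      rw [hmdef] at hX
      have hXfl : X n ω ≤ ⌊α * (n:ℝ)⌋₊ := Nat.lt_succ_iff.mp hX
      have hXαn : (X n ω : ℝ) ≤ α * n := by
        calc (X n ω : ℝ) ≤ (⌊α * n⌋₊ : ℝ) := by exact_mod_cast hXfl
          _ ≤ α * n := Nat.floor_le (by positivity)
      have hXk0 : X n ω ≤ ktilde n u d := by
        rw [hktilde n]
        refine le_trans hXfl (Nat.floor_le_floor ?_)
        calc α * n ≤ Q * n := mul_le_mul_of_nonneg_right hαQ.le hn0.le
          _ = n * Q := mul_comm _ _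
      have hXn : X n ω ≤ n := by
        refine le_trans hXfl ?_
        have hαn_le : α * n ≤ (n:ℝ) := by
          calc α * n ≤ 1 * n := mul_le_mul_of_nonneg_right hα1 hn0.le
            _ = (n:ℝ) := one_mul _
        calc ⌊α * n⌋₊ ≤ ⌊(n:ℝ)⌋₊ := Nat.floor_le_floor hαn_le
          _ = n := Nat.floor_natCast n
      -- compute T
      have hsum : (∑ k ∈ Finset.range (ktilde n u d + 1),
          if X n ω = k then u^k * d^(n-k) else 0)
          = u^(X n ω) * d^(n - X n ω) := by
        rw [Finset.sum_ite_eq (Finset.range (ktilde n u d + 1)) (X n ω)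
          (fun k => u^k * d^(n-k))]
        rw [if_pos (Finset.mem_range.mpr (Nat.lt_succ_iff.mpr hXk0))]
      have hind : ¬ (ktilde n u d + 1 ≤ X n ω) := by
        simpa [Nat.lt_succ_iff] using hXk0
      have hTval : T n ω = -1 + u^(X n ω) * d^(n - X n ω) := by
        rw [hT n ω, hsum, if_neg hind]; ring
      -- bound the payoff
      have hpow : u^(X n ω) * d^(n - X n ω) ≤ r ^ n := by
        set k := X n ω
        have hexp1 : u^k * d^(n-k) =
            Real.exp ((k:ℝ) * Real.log u + ((n:ℝ) - k) * Real.log d) := by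
          rw [Real.exp_add]
          congr 1
          · rw [← Real.log_pow, Real.exp_log (by positivity)]
          · rw [← Nat.cast_sub hXn, ← Real.log_pow, Real.exp_log (by positivity)]
        have hexp2 : (r:ℝ) ^ n = Real.exp ((n:ℝ) * ((α - Q) * L)) := by
          rw [hrdef, ← Real.exp_nat_mul]
        rw [hexp1, hexp2]
        apply Real.exp_le_exp.mpr
        have hlogd : Real.log d = -(Q * L) := by rw [hQL, hlog1d]; ring
        have hlogu : Real.log u = L - Q * L := by
          rw [hlogd] at hlogud; linarith
        have hexpand : (k:ℝ) * Real.log u + ((n:ℝ) - k) * Real.log d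
            = (k:ℝ) * L - (n:ℝ) * (Q * L) := by
          rw [hlogu, hlogd]; ring
        rw [hexpand]
        have h1 : (k:ℝ) * L ≤ α * n * L :=
          mul_le_mul_of_nonneg_right hXαn (le_of_lt hL)
        have h2 : (n:ℝ) * ((α - Q) * L) = α * n * L - n * (Q * L) := by ring
        linarith
      have hdist : dist (T n ω) (-1) = u^(X n ω) * d^(n - X n ω) := by
        rw [hTval, Real.dist_eq]
        have : (0:ℝ) < u^(X n ω) * d^(n - X n ω) := by positivity
        rw [abs_of_pos (by linarith)]
        ring
      rw [hdist] at hω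
      linarith
    -- measure bound
    have hsplit : {ω | m ≤ X n ω} ⊆
        {ω | X n ω ∈ Finset.Icc m n} ∪ {ω | n + 1 ≤ X n ω} := by
      intro ω hω
      simp only [Set.mem_setOf_eq, Set.mem_union, Finset.mem_Icc] at hω ⊢
      rcases le_or_gt (X n ω) n with h | h
      · exact Or.inl ⟨hω, h⟩
      · exact Or.inr h
    calc μ {ω | ε ≤ dist (T n ω) (-1)}
        ≤ μ ({ω | X n ω ∈ Finset.Icc m n} ∪ {ω | n + 1 ≤ X n ω}) :=
          measure_mono (subset_trans hincl hsplit)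
      _ ≤ μ {ω | X n ω ∈ Finset.Icc m n} + μ {ω | n + 1 ≤ X n ω} := measure_union_le _ _
      _ = μ {ω | X n ω ∈ Finset.Icc m n} := by rw [htail n, add_zero]
      _ ≤ ENNReal.ofReal (∑ k ∈ Finset.Icc m n, binomP n k p) := hsub n _
      _ ≤ ENNReal.ofReal (p*(1-p)/δ^2 / n) := by
          apply ENNReal.ofReal_le_ofReal
          have hkey : ∀ k ∈ Finset.Icc m n, δ * n ≤ |(k:ℝ) - n*p| := by
            intro k hk
            have hkm : m ≤ k := (Finset.mem_Icc.mp hk).1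
            rw [hmdef] at hkm
            have hαk : α * n < (k:ℝ) := by
              calc α * n < (⌊α * (n:ℝ)⌋₊ : ℝ) + 1 := Nat.lt_floor_add_one _
                _ = ((⌊α * (n:ℝ)⌋₊ + 1 : ℕ) : ℝ) := by push_cast; ring
                _ ≤ (k:ℝ) := by exact_mod_cast hkm
            rw [le_abs]
            left
            have : δ * n ≤ α * n - n * p := by
              have h1 : α - p = δ := by rw [hδdef, hαdef]; ring
              nlinarith
            linarith
          have hcheb := binomP_cheb n (le_of_lt hp0) (le_of_lt hp1)
            (t := δ * n) (mul_pos hδ hn0) (Finset.Icc m n) hkey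
          calc ∑ k ∈ Finset.Icc m n, binomP n k p
              ≤ n*p*(1-p)/(δ*n)^2 := hcheb
            _ = p*(1-p)/δ^2 / n := by field_simp
end

section
/- Let $p \in (0,1)$, $0 < d \le 1 \le u$ with $u \ne d$, $\tilde{k}_0(n,u,d) = \lfloor n \ln(1/d)/\ln(u/d) \rfloor$, let $X_n$ be a Binomial$(n,p)$ random variable, and set $C_n = \sum_{k=0}^{\tilde{k}_0(n,u,d)} \mathbf{1}\{X_n = k\}\, u^k d^{n-k}$. Then $\mathbb{V}(C_n) \to 0$ as $n \to \infty$. -/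
open Filter MeasureTheory Topology

lemma stirling_bounds : ∃ a b : ℝ, 0 < a ∧ 0 < b ∧ ∀ n : ℕ, 1 ≤ n →
    a * (Real.sqrt (2*n) * ((n:ℝ)/Real.exp 1)^n) ≤ ((Nat.factorial n : ℕ) : ℝ) ∧
    ((Nat.factorial n : ℕ) : ℝ) ≤ b * (Real.sqrt (2*n) * ((n:ℝ)/Real.exp 1)^n) := by
  obtain ⟨a, ha, hlb⟩ := Stirling.stirlingSeq'_bounded_by_pos_constant
  refine ⟨a, Stirling.stirlingSeq 1, ha, ?_, ?_⟩
  · rw [Stirling.stirlingSeq_one]; positivity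
  intro n hn
  obtain ⟨m, rfl⟩ : ∃ m, n = m + 1 := ⟨n - 1, by omega⟩
  have hD : 0 < Real.sqrt (2*(m+1:ℕ)) * (((m+1:ℕ):ℝ)/Real.exp 1)^(m+1:ℕ) := by
    have : (0:ℝ) < ((m+1:ℕ):ℝ) := by positivity
    positivity
  have h1 : a ≤ Stirling.stirlingSeq (m+1) := hlb m
  have h2 : Stirling.stirlingSeq (m+1) ≤ Stirling.stirlingSeq 1 := by
    have := Stirling.stirlingSeq'_antitone (Nat.zero_le m)
    simpa using this
  rw [Stirling.stirlingSeq] at h1 h2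
  constructor
  · rw [← le_div_iff₀ hD]
    convert h1 using 3 <;> push_cast <;> ring
  · rw [← div_le_iff₀ hD]
    convert h2 using 3 <;> push_cast <;> ring



/-- maximizing `p^k q^(n-k)` over `p` -/
lemma pmax {p : ℝ} (hp0 : 0 ≤ p) (hp1 : p ≤ 1) (n k : ℕ) (h1 : 1 ≤ k) (h2 : k < n) :
    p^k * (1-p)^(n-k) ≤ ((k:ℝ)/n)^k * (((n-k:ℕ):ℝ)/n)^(n-k) := by
  set x : ℝ := (n:ℝ) with hxdef
  set y : ℝ := (k:ℝ) with hydef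
  set z : ℝ := ((n-k:ℕ):ℝ) with hzdef
  have hy : (1:ℝ) ≤ y := by rw [hydef]; exact_mod_cast h1
  have hz : (1:ℝ) ≤ z := by
    rw [hzdef]; exact_mod_cast Nat.one_le_iff_ne_zero.mpr (by omega)
  have hxyz : x = y + z := by rw [hxdef, hydef, hzdef]; push_cast [Nat.cast_sub h2.le]; ring
  have hx : (0:ℝ) < x := by rw [hxyz]; linarith
  have hq0 : (0:ℝ) ≤ 1 - p := by linarith
  have hstep : ∀ (t : ℝ) (m : ℕ), 0 ≤ t → (m:ℝ) ≥ 1 → t ≤ 1 →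
      t^m ≤ ((m:ℝ)/x)^m * Real.exp (t*x - m) := by
    intro t m ht hm ht1
    have hm0 : (0:ℝ) < (m:ℝ) := by linarith
    have h0 : t ≤ (m/x) * Real.exp (t*x/m - 1) := by
      have := Real.add_one_le_exp (t*x/m - 1)
      have h' : t*x/m ≤ Real.exp (t*x/m - 1) := by linarith
      calc t = (m/x) * (t*x/m) := by field_simp
        _ ≤ (m/x) * Real.exp (t*x/m - 1) := by
            apply mul_le_mul_of_nonneg_left h' (by positivity)
    calc t^m ≤ ((m/x) * Real.exp (t*x/m - 1))^m := pow_le_pow_left₀ ht h0 m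
      _ = ((m:ℝ)/x)^m * Real.exp (t*x/m - 1)^m := mul_pow _ _ _
      _ = ((m:ℝ)/x)^m * Real.exp ((m:ℝ)*(t*x/m - 1)) := by
          rw [← Real.exp_nat_mul]
      _ = ((m:ℝ)/x)^m * Real.exp (t*x - m) := by
          congr 2; field_simp
  have h1' := hstep p k hp0 hy hp1
  have h2' := hstep (1-p) (n-k) hq0 hz (by linarith)
  calc p^k * (1-p)^(n-k)
      ≤ (((k:ℝ)/x)^k * Real.exp (p*x - k)) * ((((n-k:ℕ):ℝ)/x)^(n-k) * Real.exp ((1-p)*x - ((n-k:ℕ):ℝ))) := by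
        apply mul_le_mul h1' h2' (by positivity) (by positivity)
    _ = ((k:ℝ)/x)^k * (((n-k:ℕ):ℝ)/x)^(n-k) * Real.exp ((p*x - y) + ((1-p)*x - z)) := by
        rw [Real.exp_add]; ring
    _ = ((k:ℝ)/x)^k * (((n-k:ℕ):ℝ)/x)^(n-k) := by
        have : (p*x - y) + ((1-p)*x - z) = 0 := by rw [hxyz]; ring
        rw [this, Real.exp_zero, mul_one]

lemma pmf_upper_bound : ∃ A : ℝ, 0 < A ∧ ∀ (p : ℝ) (n k : ℕ), 0 ≤ p → p ≤ 1 → 1 ≤ k → k < n →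
    ((n.choose k : ℕ) : ℝ) * p^k * (1-p)^(n-k)
      ≤ A * Real.sqrt n / (Real.sqrt k * Real.sqrt (n-k : ℕ)) := by
  obtain ⟨a, b, ha, hb, hab⟩ := stirling_bounds
  refine ⟨b/(a*a), by positivity, ?_⟩
  intro p n k hp0 hp1 h1 h2
  set m := n - k with hm
  have hkm : k + m = n := by omega
  have hm1 : 1 ≤ m := by omega
  have hn1 : 1 ≤ n := by omega
  set E := Real.exp 1 with hE
  have hE0 : (0:ℝ) < E := Real.exp_pos 1
  have hx : (0:ℝ) < (n:ℝ) := by exact_mod_cast Nat.pos_of_ne_zero (by omega)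
  have hy : (0:ℝ) < (k:ℝ) := by exact_mod_cast h1
  have hz : (0:ℝ) < (m:ℝ) := by exact_mod_cast hm1
  -- step 2 : bound on choose
  have hcast : ((n.choose k : ℕ) : ℝ) = (Nat.factorial n : ℝ) / ((Nat.factorial k : ℝ) * (Nat.factorial m : ℝ)) := by
    rw [Nat.cast_choose ℝ h2.le]
  have hfn := (hab n hn1).2
  have hfk := (hab k h1).1
  have hfm := (hab m hm1).1
  have hDk : 0 < Real.sqrt (2*k) * ((k:ℝ)/E)^k := by positivity
  have hDm : 0 < Real.sqrt (2*m) * ((m:ℝ)/E)^m := by positivity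
  have hDn : 0 < Real.sqrt (2*n) * ((n:ℝ)/E)^n := by positivity
  have hchoose : ((n.choose k : ℕ) : ℝ) ≤
      (b * (Real.sqrt (2*n) * ((n:ℝ)/E)^n)) /
      ((a * (Real.sqrt (2*k) * ((k:ℝ)/E)^k)) * (a * (Real.sqrt (2*m) * ((m:ℝ)/E)^m))) := by
    rw [hcast]
    apply div_le_div₀ (by positivity) hfn (by positivity)
    exact mul_le_mul hfk hfm (by positivity) (Nat.cast_nonneg _)
  -- step 1
  have hpm : p^k * (1-p)^(n-k) ≤ ((k:ℝ)/n)^k * (((n-k:ℕ):ℝ)/n)^(n-k) := pmax hp0 hp1 n k h1 h2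
  -- key algebraic identity
  have hkey : ((n:ℝ)/E)^n * (((k:ℝ)/(n:ℝ))^k * (((m:ℕ):ℝ)/(n:ℝ))^m) = ((k:ℝ)/E)^k * ((m:ℝ)/E)^m := by
    have hn' : ((n:ℝ)/E)^n = ((n:ℝ)/E)^k * ((n:ℝ)/E)^m := by rw [← pow_add, hkm]
    rw [hn']
    rw [show ((n:ℝ)/E)^k * ((n:ℝ)/E)^m * (((k:ℝ)/(n:ℝ))^k * (((m:ℕ):ℝ)/(n:ℝ))^m)
        = (((n:ℝ)/E) * ((k:ℝ)/(n:ℝ)))^k * (((n:ℝ)/E) * (((m:ℕ):ℝ)/(n:ℝ)))^m by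
      rw [mul_pow, mul_pow]; ring]
    congr 2 <;> (field_simp; try ring)
  calc ((n.choose k : ℕ) : ℝ) * p^k * (1-p)^(n-k)
      = ((n.choose k : ℕ) : ℝ) * (p^k * (1-p)^(n-k)) := by ring
    _ ≤ ((b * (Real.sqrt (2*n) * ((n:ℝ)/E)^n)) /
      ((a * (Real.sqrt (2*k) * ((k:ℝ)/E)^k)) * (a * (Real.sqrt (2*m) * ((m:ℝ)/E)^m)))) *
        (((k:ℝ)/n)^k * (((n-k:ℕ):ℝ)/n)^(n-k)) := by
        apply mul_le_mul hchoose hpm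
          (mul_nonneg (pow_nonneg hp0 _) (pow_nonneg (by linarith) _)) (by positivity)
    _ = (b/(a*a)) * (Real.sqrt (2*n) / (Real.sqrt (2*k) * Real.sqrt (2*m))) *
        ((((n:ℝ)/E)^n * (((k:ℝ)/(n:ℝ))^k * (((m:ℕ):ℝ)/(n:ℝ))^m)) / (((k:ℝ)/E)^k * ((m:ℝ)/E)^m)) := by
        rw [← hm]; field_simp
    _ = (b/(a*a)) * (Real.sqrt (2*n) / (Real.sqrt (2*k) * Real.sqrt (2*m))) := by
        rw [hkey, div_self (by positivity), mul_one]
    _ ≤ (b/(a*a)) * (Real.sqrt n / (Real.sqrt k * Real.sqrt m)) := by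
        apply mul_le_mul_of_nonneg_left _ (by positivity)
        rw [show (2:ℝ)*n = 2*(n:ℝ) by ring, Real.sqrt_mul (by norm_num) (n:ℝ),
            Real.sqrt_mul (by norm_num) (k:ℝ), Real.sqrt_mul (by norm_num) (m:ℝ)]
        have h2' : (1:ℝ) ≤ Real.sqrt 2 := by
          rw [show (1:ℝ) = Real.sqrt 1 by simp]
          exact Real.sqrt_le_sqrt (by norm_num)
        rw [div_le_div_iff₀ (by positivity) (by positivity)]
        have hsk : (0:ℝ) < Real.sqrt k := Real.sqrt_pos.mpr hy
        have hsm : (0:ℝ) < Real.sqrt m := Real.sqrt_pos.mpr hz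
        have hsn : (0:ℝ) ≤ Real.sqrt n := Real.sqrt_nonneg _
        calc Real.sqrt 2 * Real.sqrt n * (Real.sqrt k * Real.sqrt m)
            = Real.sqrt n * (Real.sqrt k * Real.sqrt m) * Real.sqrt 2 := by ring
          _ ≤ Real.sqrt n * (Real.sqrt k * Real.sqrt m) * (Real.sqrt 2 * Real.sqrt 2) := by
              apply mul_le_mul_of_nonneg_left _ (by positivity)
              nlinarith
          _ = Real.sqrt n * (Real.sqrt 2 * Real.sqrt k * (Real.sqrt 2 * Real.sqrt m)) := by ring
    _ = (b/(a*a)) * Real.sqrt n / (Real.sqrt k * Real.sqrt m) := by ring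




section kt
variable {u d : ℝ}

lemma hud (hd1 : d ≤ 1) (hu : 1 ≤ u) (hne : u ≠ d) : d < u := by
  rcases lt_or_eq_of_le hd1 with h | h
  · linarith
  · subst h; exact lt_of_le_of_ne hu (Ne.symm hne)

lemma hL (hd0 : 0 < d) (hd1 : d ≤ 1) (hu : 1 ≤ u) (hne : u ≠ d) : 0 < Real.log (u/d) :=
  Real.log_pos ((one_lt_div hd0).mpr (hud hd1 hu hne))

lemma hlog1d (hd0 : 0 < d) (hd1 : d ≤ 1) : 0 ≤ Real.log (1/d) :=
  Real.log_nonneg (one_le_one_div hd0 hd1)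

lemma ktilde_le_ratio (hd0 : 0 < d) (hd1 : d ≤ 1) (hu : 1 ≤ u) (hne : u ≠ d) (n : ℕ) :
    (ktilde n u d : ℝ) ≤ (n : ℝ) * Real.log (1/d) / Real.log (u/d) :=
  Nat.floor_le (div_nonneg (mul_nonneg (Nat.cast_nonneg n) (hlog1d hd0 hd1)) (hL hd0 hd1 hu hne).le)

lemma ktilde_le_n (hd0 : 0 < d) (hd1 : d ≤ 1) (hu : 1 ≤ u) (hne : u ≠ d) (n : ℕ) :
    ktilde n u d ≤ n := by
  apply Nat.floor_le_of_le
  rw [div_le_iff₀ (hL hd0 hd1 hu hne)]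
  have h1 : Real.log (1/d) ≤ Real.log (u/d) :=
    Real.log_le_log (by positivity) (by gcongr)
  nlinarith [hlog1d hd0 hd1, hL hd0 hd1 hu hne, Nat.cast_nonneg (α := ℝ) n]

lemma payoff_le_one (hd0 : 0 < d) (hd1 : d ≤ 1) (hu : 1 ≤ u) (hne : u ≠ d) (n : ℕ) : u^(ktilde n u d) * d^(n - ktilde n u d) ≤ 1 := by
  have hu0 : (0:ℝ) < u := by linarith
  have hK := ktilde_le_ratio (u := u) hd0 hd1 hu hne n
  have hKn := ktilde_le_n hd0 hd1 hu hne n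
  have hL' := hL hd0 hd1 hu hne
  set K := ktilde n u d
  have hcast : ((n - K : ℕ) : ℝ) = (n : ℝ) - K := by push_cast [Nat.cast_sub hKn]; ring
  have hlog : (K : ℝ) * Real.log u + ((n - K : ℕ) : ℝ) * Real.log d ≤ 0 := by
    rw [hcast]
    have h2 : (K : ℝ) * Real.log (u/d) ≤ (n:ℝ) * Real.log (1/d) := by
      rw [le_div_iff₀ hL'] at hK; linarith
    rw [Real.log_div (by linarith) (by linarith)] at h2
    rw [show (1:ℝ)/d = d⁻¹ by ring, Real.log_inv] at h2
    nlinarith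
  have he : u^K * d^(n-K) = Real.exp ((K : ℝ) * Real.log u + ((n - K : ℕ) : ℝ) * Real.log d) := by
    rw [Real.exp_add]
    congr 1
    · rw [← Real.exp_log hu0, ← Real.exp_nat_mul]
      simp [Real.exp_log hu0]
    · rw [← Real.exp_log hd0, ← Real.exp_nat_mul]
      simp [Real.exp_log hd0]
  rw [he, Real.exp_le_one_iff]
  exact hlog

end kt

lemma pb_le_one {p : ℝ} (hp0 : 0 ≤ p) (hp1 : p ≤ 1) {n k : ℕ} (hkn : k ≤ n) :
    ((n.choose k : ℕ) : ℝ) * p^k * (1-p)^(n-k) ≤ 1 := by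
  have hq0 : (0:ℝ) ≤ 1 - p := by linarith
  have hbin := add_pow p (1-p) n
  rw [show p + (1-p) = 1 by ring, one_pow] at hbin
  have hmem : k ∈ Finset.range (n+1) := Finset.mem_range.mpr (by omega)
  have hle := Finset.single_le_sum (f := fun i => p ^ i * (1-p) ^ (n - i) * (n.choose i : ℝ))
    (fun i _ => by positivity) hmem
  rw [← hbin] at hle
  calc ((n.choose k : ℕ) : ℝ) * p^k * (1-p)^(n-k)
      = p ^ k * (1-p) ^ (n - k) * (n.choose k : ℝ) := by ring
    _ ≤ 1 := hle

lemma sqrt_nat_tendsto : Tendsto (fun n : ℕ => Real.sqrt n) atTop atTop := by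
  apply Filter.tendsto_atTop_atTop.mpr
  intro b
  obtain ⟨N, hN⟩ := exists_nat_ge (b^2 ⊔ 0)
  refine ⟨N, fun n hn => ?_⟩
  have h1 : (b^2 ⊔ 0 : ℝ) ≤ n := le_trans hN (by exact_mod_cast hn)
  calc b ≤ Real.sqrt (b^2) := by rw [Real.sqrt_sq_eq_abs]; exact le_abs_self b
    _ ≤ Real.sqrt n := Real.sqrt_le_sqrt (le_trans (le_max_left _ _) h1)

lemma key_tendsto {p u d : ℝ} (hp0 : 0 < p) (hp1 : p < 1)
    (hd0 : 0 < d) (hd1 : d ≤ 1) (hu : 1 ≤ u) (hne : u ≠ d) (j : ℕ) :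
    Tendsto (fun n : ℕ => ((n.choose (ktilde n u d - j) : ℕ) : ℝ) *
      p^(ktilde n u d - j) * (1-p)^(n - (ktilde n u d - j))) atTop (𝓝 0) := by
  have hq0 : (0:ℝ) ≤ 1 - p := by linarith
  have hq1 : 1 - p < 1 := by linarith
  by_cases hd : d = 1
  · subst hd
    have hkt : ∀ n, ktilde n u 1 = 0 := by
      intro n; unfold ktilde; simp
    apply Tendsto.congr (f₁ := fun n : ℕ => (1-p)^n)
    · intro n; rw [hkt n]; simp
    · exact tendsto_pow_atTop_nhds_zero_of_lt_one hq0 hq1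
  · have hd1' : d < 1 := lt_of_le_of_ne hd1 hd
    have hlog1d' : 0 < Real.log (1/d) := Real.log_pos (one_lt_one_div hd0 hd1')
    by_cases hu1 : u = 1
    · subst hu1
      have hkt : ∀ n, ktilde n 1 d = n := by
        intro n; unfold ktilde
        rw [mul_div_assoc, div_self (ne_of_gt hlog1d'), mul_one, Nat.floor_natCast]
      apply squeeze_zero' (g := fun n : ℕ => ((1-p)^j/p^j) * ((n:ℝ)^j * p^n))
      · filter_upwards with n
        have : (0:ℝ) ≤ 1 - p := hq0
        positivity
      · filter_upwards [eventually_ge_atTop j] with n hn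
        rw [hkt n]
        have h1 : n - (n - j) = j := by omega
        rw [h1, Nat.choose_symm (by omega)]
        have h2 : ((n.choose j : ℕ):ℝ) ≤ (n:ℝ)^j := by exact_mod_cast Nat.choose_le_pow n j
        have h3 : p^(n-j) = p^n / p^j := by
          rw [eq_div_iff (by positivity), ← pow_add]; congr 1; omega
        calc ((n.choose j : ℕ):ℝ) * p^(n-j) * (1-p)^j
            ≤ (n:ℝ)^j * p^(n-j) * (1-p)^j := by
              apply mul_le_mul_of_nonneg_right
                (mul_le_mul_of_nonneg_right h2 (by positivity)) (by positivity)
          _ = ((1-p)^j/p^j) * ((n:ℝ)^j * p^n) := by rw [h3]; field_simp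
      · have h := (tendsto_pow_const_mul_const_pow_of_lt_one j hp0.le hp1).const_mul
          ((1-p)^j/p^j)
        simpa using h
    · have hu1' : 1 < u := lt_of_le_of_ne hu (Ne.symm hu1)
      set α := Real.log (1/d) / Real.log (u/d) with hα
      have hL' : 0 < Real.log (u/d) := hL hd0 hd1 hu hne
      have hα0 : 0 < α := div_pos hlog1d' hL'
      have hα1 : α < 1 := by
        rw [hα, div_lt_one hL']
        rw [Real.log_div (by linarith : u ≠ 0) (ne_of_gt hd0),
          show (1:ℝ)/d = d⁻¹ by ring, Real.log_inv] at *
        have : 0 < Real.log u := Real.log_pos hu1'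
        linarith
      obtain ⟨A, hA, hAbd⟩ := pmf_upper_bound
      have hs : 0 < Real.sqrt (α * (1 - α) / 2) := Real.sqrt_pos.mpr (by nlinarith)
      set s := Real.sqrt (α * (1 - α) / 2) with hsdef
      set D := A / s with hD
      have hD0 : 0 < D := div_pos hA hs
      apply squeeze_zero' (g := fun n : ℕ => D / Real.sqrt n)
      · filter_upwards with n
        have h1 : (0:ℝ) ≤ p := hp0.le
        positivity
      · obtain ⟨N, hN⟩ := exists_nat_ge ((2*(j:ℝ)+4)/α)
        filter_upwards [eventually_ge_atTop (max N 1)] with n hn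
        have hn1 : 1 ≤ n := le_trans (le_max_right N 1) hn
        have hnN : (N:ℝ) ≤ n := by exact_mod_cast le_trans (le_max_left N 1) hn
        have hnα : 2*(j:ℝ)+4 ≤ (n:ℝ) * α := by
          rw [div_le_iff₀ hα0] at hN; nlinarith
        have hkt_eq : ktilde n u d = ⌊(n:ℝ) * α⌋₊ := by
          unfold ktilde; rw [hα, mul_div_assoc]
        have hfl : (n:ℝ)*α - 1 < (ktilde n u d : ℝ) := by
          rw [hkt_eq]; exact Nat.sub_one_lt_floor _
        have hfl2 : (ktilde n u d : ℝ) ≤ (n:ℝ)*α := by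
          rw [hkt_eq]; exact Nat.floor_le (by positivity)
        have hjk : j + 1 ≤ ktilde n u d := by
          have h' : ((j:ℝ)+1) ≤ (ktilde n u d : ℝ) := by linarith
          exact_mod_cast h'
        set K := ktilde n u d - j with hKdef
        have hKcast : (K:ℝ) = (ktilde n u d : ℝ) - j := by
          rw [hKdef]; push_cast [Nat.cast_sub (by omega : j ≤ ktilde n u d)]; ring
        have hK1 : 1 ≤ K := by omega
        have hKreal : (n:ℝ)*α/2 ≤ (K:ℝ) := by rw [hKcast]; linarith
        have hKn' : K < n := by
          have h' : (K:ℝ) < (n:ℝ) := by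
            rw [hKcast]
            have : (n:ℝ)*α < (n:ℝ)*1 := by
              apply mul_lt_mul_of_pos_left hα1
              have : (1:ℕ) ≤ n := hn1
              exact_mod_cast Nat.lt_of_lt_of_le Nat.zero_lt_one this
            have hj0 : (0:ℝ) ≤ j := Nat.cast_nonneg j
            linarith
          exact_mod_cast h'
        have hnk : (n:ℝ)*(1-α) ≤ ((n - K : ℕ):ℝ) := by
          push_cast [Nat.cast_sub hKn'.le]
          have : (K:ℝ) ≤ (n:ℝ)*α := by rw [hKcast]; linarith
          linarith
        have hbd := hAbd p n K hp0.le hp1.le hK1 hKn'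
        refine le_trans hbd ?_
        have hn0 : (0:ℝ) < n := by exact_mod_cast Nat.lt_of_lt_of_le Nat.zero_lt_one hn1
        have hsK : Real.sqrt ((n:ℝ)*α/2) ≤ Real.sqrt K := Real.sqrt_le_sqrt hKreal
        have hsnk : Real.sqrt ((n:ℝ)*(1-α)) ≤ Real.sqrt ((n - K : ℕ):ℝ) := Real.sqrt_le_sqrt hnk
        have hprod : (n:ℝ) * s ≤ Real.sqrt K * Real.sqrt ((n - K : ℕ):ℝ) := by
          have h1 : Real.sqrt ((n:ℝ)*α/2) * Real.sqrt ((n:ℝ)*(1-α))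
              ≤ Real.sqrt K * Real.sqrt ((n - K : ℕ):ℝ) :=
            mul_le_mul hsK hsnk (Real.sqrt_nonneg _) (Real.sqrt_nonneg _)
          refine le_trans (le_of_eq ?_) h1
          rw [← Real.sqrt_mul (by positivity : (0:ℝ) ≤ (n:ℝ)*α/2),
            show (n:ℝ)*α/2 * ((n:ℝ)*(1-α)) = (n:ℝ)^2 * (α*(1-α)/2) by ring,
            Real.sqrt_mul (by positivity : (0:ℝ) ≤ ((n:ℝ)^2)), Real.sqrt_sq hn0.le, hsdef]
        have hsn : 0 < Real.sqrt n := Real.sqrt_pos.mpr hn0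
        have hK0 : (0:ℝ) < (K:ℝ) := by exact_mod_cast hK1
        have hnK0 : (0:ℝ) < ((n - K : ℕ):ℝ) := by
          have : 0 < n - K := by omega
          exact_mod_cast this
        rw [div_le_div_iff₀ (mul_pos (Real.sqrt_pos.mpr hK0) (Real.sqrt_pos.mpr hnK0)) hsn]
        calc A * Real.sqrt n * Real.sqrt n = A * (n:ℝ) := by
              rw [mul_assoc, Real.mul_self_sqrt hn0.le]
          _ = D * ((n:ℝ) * s) := by rw [hD]; field_simp
          _ ≤ D * (Real.sqrt K * Real.sqrt ((n - K : ℕ):ℝ)) := by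
              exact mul_le_mul_of_nonneg_left hprod hD0.le
          _ = D * (Real.sqrt K * Real.sqrt ((n - K : ℕ):ℝ)) := rfl
      · have h := sqrt_nat_tendsto.inv_tendsto_atTop.const_mul D
        simpa [div_eq_mul_inv] using h


theorem variance_of_losing_payout_tendsto_zero
    {Ω : Type*} [MeasurableSpace Ω] (μ : Measure Ω) [IsProbabilityMeasure μ]
    (p u d : ℝ) (hp0 : 0 < p) (hp1 : p < 1)
    (hd0 : 0 < d) (hd1 : d ≤ 1) (hu : 1 ≤ u) (hne : u ≠ d)
    (X : ℕ → Ω → ℕ) (hXmeas : ∀ n, Measurable (X n))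
    (hXbin : ∀ n k : ℕ,
      μ {ω | X n ω = k} = ENNReal.ofReal ((n.choose k : ℝ) * p^k * (1 - p)^(n-k)))
    (C : ℕ → Ω → ℝ)
    (hC : ∀ n ω, C n ω =
      ∑ k ∈ Finset.range (ktilde n u d + 1),
        if X n ω = k then u^k * d^(n-k) else 0) :
    Tendsto (fun n : ℕ => ProbabilityTheory.variance (C n) μ) atTop (nhds 0) := by
  classical
  have hq0 : (0:ℝ) ≤ 1 - p := by linarith
  set pb : ℕ → ℕ → ℝ := fun n k => ((n.choose k : ℕ):ℝ) * p^k * (1-p)^(n-k) with hpb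
  have hpb0 : ∀ n k, 0 ≤ pb n k := fun n k => by
    simp only [hpb]; positivity
  set S : ℕ → ℝ := fun n => ∑ k ∈ Finset.range (ktilde n u d + 1),
    pb n k * (u^k * d^(n-k))^2 with hS
  have hS0 : ∀ n, 0 ≤ S n := by
    intro n
    apply Finset.sum_nonneg
    intro k _
    exact mul_nonneg (hpb0 n k) (sq_nonneg _)
  -- measurability
  have hsmeas : ∀ n k, MeasurableSet {ω | X n ω = k} :=
    fun n k => hXmeas n (measurableSet_singleton k)
  have hmeasC : ∀ n, Measurable (C n) := by
    intro n
    have h : C n = fun ω => ∑ k ∈ Finset.range (ktilde n u d + 1),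
        if X n ω = k then u^k * d^(n-k) else 0 := funext (hC n)
    rw [h]
    apply Finset.measurable_sum
    intro k _
    exact Measurable.ite (hsmeas n k) measurable_const measurable_const
  have hmuk : ∀ n k, (μ {ω | X n ω = k}).toReal = pb n k := by
    intro n k
    rw [hXbin n k, ENNReal.toReal_ofReal (hpb0 n k)]
  have hind : ∀ n k (b : ℝ), (fun ω => if X n ω = k then b else 0)
      = Set.indicator {ω | X n ω = k} (fun _ => b) := by
    intro n k b
    funext ω
    simp [Set.indicator_apply, Set.mem_setOf_eq]
  have hint : ∀ n k (b:ℝ), Integrable (fun ω => if X n ω = k then b else 0) μ := by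
    intro n k b
    rw [hind n k b]
    exact (integrable_const b).indicator (hsmeas n k)
  have hintegral : ∀ n k (b:ℝ), ∫ ω, (if X n ω = k then b else 0) ∂μ = pb n k * b := by
    intro n k b
    rw [hind n k b, integral_indicator_const b (hsmeas n k), smul_eq_mul]; exact congrArg (· * b) (hmuk n k)
  have hCsq : ∀ n ω, (C n ω)^2 = ∑ k ∈ Finset.range (ktilde n u d + 1),
      if X n ω = k then (u^k * d^(n-k))^2 else 0 := by
    intro n ω
    rw [hC n ω, Finset.sum_ite_eq (Finset.range (ktilde n u d + 1)) (X n ω)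
        (fun k => u^k * d^(n-k)),
      Finset.sum_ite_eq (Finset.range (ktilde n u d + 1)) (X n ω)
        (fun k => (u^k * d^(n-k))^2)]
    split_ifs with h
    · rfl
    · simp
  have hvar : ∀ n, ProbabilityTheory.variance (C n) μ ≤ S n := by
    intro n
    refine le_trans (ProbabilityTheory.variance_le_expectation_sq
      (hmeasC n).aestronglyMeasurable) (le_of_eq ?_)
    calc ∫ ω, ((C n)^2) ω ∂μ
        = ∫ ω, (∑ k ∈ Finset.range (ktilde n u d + 1),
            if X n ω = k then (u^k * d^(n-k))^2 else 0) ∂μ := by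
          apply integral_congr_ae
          filter_upwards with ω
          rw [Pi.pow_apply, hCsq n ω]
      _ = ∑ k ∈ Finset.range (ktilde n u d + 1),
            ∫ ω, (if X n ω = k then (u^k * d^(n-k))^2 else 0) ∂μ :=
          integral_finset_sum _ (fun k _ => hint n k _)
      _ = S n := by
          apply Finset.sum_congr rfl
          intro k _
          exact hintegral n k _
  -- analysis part
  have hud' : d < u := hud hd1 hu hne
  have hu0 : (0:ℝ) < u := by linarith
  set ρ := (d/u)^2 with hρ
  have hρ0 : (0:ℝ) ≤ ρ := sq_nonneg _
  have hρ1 : ρ < 1 := by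
    have h1 : d/u < 1 := (div_lt_one hu0).mpr hud'
    have h2 : 0 < d/u := by positivity
    nlinarith
  have h1ρ : 0 < 1 - ρ := by linarith
  have hpay : ∀ n k, k ≤ ktilde n u d → (u^k * d^(n-k))^2 ≤ ρ^(ktilde n u d - k) := by
    intro n k hk
    set K := ktilde n u d with hK
    have hKn := ktilde_le_n hd0 hd1 hu hne n
    have h1 : u^k * d^(n-k) ≤ (d/u)^(K-k) := by
      rw [div_pow, le_div_iff₀ (by positivity)]
      have hsplit : n - k = (n - K) + (K - k) := by omega
      calc u^k * d^(n-k) * u^(K-k)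
          = (u^k * u^(K-k)) * (d^(n-K) * d^(K-k)) := by rw [hsplit, pow_add]; ring
        _ = (u^K * d^(n-K)) * d^(K-k) := by
            rw [← pow_add, show k + (K-k) = K by omega]; ring
        _ ≤ 1 * d^(K-k) :=
            mul_le_mul_of_nonneg_right (payoff_le_one hd0 hd1 hu hne n) (by positivity)
        _ = d^(K-k) := one_mul _
    calc (u^k * d^(n-k))^2 ≤ ((d/u)^(K-k))^2 :=
          pow_le_pow_left₀ (by positivity) h1 2
      _ = ρ^(K-k) := by rw [hρ, ← pow_mul, ← pow_mul, Nat.mul_comm]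
  have hSle : ∀ n, S n ≤ ∑ j ∈ Finset.range (ktilde n u d + 1),
      pb n (ktilde n u d - j) * ρ^j := by
    intro n
    have h1 : S n ≤ ∑ k ∈ Finset.range (ktilde n u d + 1),
        pb n k * ρ^(ktilde n u d - k) := by
      apply Finset.sum_le_sum
      intro k hk
      exact mul_le_mul_of_nonneg_left
        (hpay n k (by have := Finset.mem_range.mp hk; omega)) (hpb0 n k)
    refine h1.trans (le_of_eq ?_)
    rw [← Finset.sum_range_reflect]
    apply Finset.sum_congr rfl
    intro j hj
    have hj' : j ≤ ktilde n u d := by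
      have := Finset.mem_range.mp hj; omega
    have e1 : ktilde n u d + 1 - 1 - j = ktilde n u d - j := by omega
    have e2 : ktilde n u d - (ktilde n u d - j) = j := by omega
    rw [e1, e2]
  have htail : ∀ J n, (∑ j ∈ Finset.range (ktilde n u d + 1),
        pb n (ktilde n u d - j) * ρ^j)
      ≤ (∑ j ∈ Finset.range (J+1), pb n (ktilde n u d - j)) + ρ^(J+1)/(1-ρ) := by
    intro J n
    set K := ktilde n u d with hK
    have hterm : ∀ j, pb n (K - j) * ρ^j ≤ pb n (K - j) :=
      fun j => by
        calc pb n (K-j) * ρ^j ≤ pb n (K-j) * 1 :=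
              mul_le_mul_of_nonneg_left (pow_le_one₀ hρ0 hρ1.le) (hpb0 n _)
          _ = pb n (K-j) := mul_one _
    have htail0 : 0 ≤ ρ^(J+1)/(1-ρ) := div_nonneg (pow_nonneg hρ0 _) h1ρ.le
    by_cases hKJ : K + 1 ≤ J + 1
    · have h1 : ∑ j ∈ Finset.range (K+1), pb n (K-j) * ρ^j
          ≤ ∑ j ∈ Finset.range (J+1), pb n (K-j) * ρ^j :=
        Finset.sum_le_sum_of_subset_of_nonneg (Finset.range_subset_range.mpr hKJ)
          (fun j _ _ => mul_nonneg (hpb0 n _) (pow_nonneg hρ0 _))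
      have h2 : ∑ j ∈ Finset.range (J+1), pb n (K-j) * ρ^j
          ≤ ∑ j ∈ Finset.range (J+1), pb n (K-j) :=
        Finset.sum_le_sum (fun j _ => hterm j)
      linarith
    · push_neg at hKJ
      have hsplit : ∑ j ∈ Finset.range (K+1), pb n (K-j) * ρ^j
          = (∑ j ∈ Finset.range (J+1), pb n (K-j) * ρ^j)
            + ∑ j ∈ Finset.Ico (J+1) (K+1), pb n (K-j) * ρ^j := by
        rw [Finset.range_eq_Ico,
          ← Finset.sum_Ico_consecutive (fun j => pb n (K-j) * ρ^j)
            (Nat.zero_le (J+1)) (by omega : J+1 ≤ K+1),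
          ← Finset.range_eq_Ico]
      rw [hsplit]
      have h2 : ∑ j ∈ Finset.range (J+1), pb n (K-j) * ρ^j
          ≤ ∑ j ∈ Finset.range (J+1), pb n (K-j) :=
        Finset.sum_le_sum (fun j _ => hterm j)
      have h3 : ∑ j ∈ Finset.Ico (J+1) (K+1), pb n (K-j) * ρ^j
          ≤ ∑ j ∈ Finset.Ico (J+1) (K+1), ρ^j := by
        apply Finset.sum_le_sum
        intro j _
        calc pb n (K-j) * ρ^j ≤ 1 * ρ^j := by
              apply mul_le_mul_of_nonneg_right _ (pow_nonneg hρ0 _)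
              exact pb_le_one hp0.le hp1.le
                (le_trans (Nat.sub_le _ _) (ktilde_le_n hd0 hd1 hu hne n))
          _ = ρ^j := one_mul _
      have h4 : ∑ j ∈ Finset.Ico (J+1) (K+1), ρ^j ≤ ρ^(J+1)/(1-ρ) :=
        geom_sum_Ico_le_of_lt_one hρ0 hρ1
      linarith
  -- conclusion
  apply squeeze_zero (fun n => ProbabilityTheory.variance_nonneg _ _) hvar
  rw [NormedAddCommGroup.tendsto_nhds_zero]
  intro ε hε
  obtain ⟨J, hJ⟩ := exists_pow_lt_of_lt_one (show (0:ℝ) < ε/2 * (1-ρ) by positivity) hρ1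
  have hJ' : ρ^(J+1)/(1-ρ) < ε/2 := by
    rw [div_lt_iff₀ h1ρ]
    calc ρ^(J+1) ≤ ρ^J := pow_le_pow_of_le_one hρ0 hρ1.le (Nat.le_succ J)
      _ < ε/2 * (1-ρ) := hJ
  have hsum0 : Tendsto (fun n => ∑ j ∈ Finset.range (J+1),
      pb n (ktilde n u d - j)) atTop (𝓝 0) := by
    have h := tendsto_finset_sum (Finset.range (J+1))
      (fun j _ => key_tendsto hp0 hp1 hd0 hd1 hu hne j)
    simpa using h
  have h2 := (NormedAddCommGroup.tendsto_nhds_zero.mp hsum0) (ε/2) (half_pos hε)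
  filter_upwards [h2] with n hn
  have hb1 : ∑ j ∈ Finset.range (J+1), pb n (ktilde n u d - j) < ε/2 :=
    lt_of_le_of_lt (le_abs_self _) hn
  have : S n < ε := by
    have := hSle n
    have := htail J n
    linarith
  rw [Real.norm_eq_abs, abs_of_nonneg (hS0 n)]
  exact this
end
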